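/- Let d ≥ 1 and let Ψ̃ be the rank-one matrix indexed by Fin d × Fin d with entries Ψ̃[(s,t),(s',t')] = [s = t]·[s' = t'] (the unnormalized maximally entangled projector |Σ_s ss⟩⟨Σ_s ss|). Let c be the 3-cycle (0 1 2) of Fin 3, and let R be the reindexed 3-fold Kronecker power Ψ̃^{⊗3}, a matrix on (Fin 3 → Fin d) × (Fin 3 → Fin d). Then for i, j ∈ {c, c⁻¹}: Tr[(W_i ⊗ W_j) · R] = d³ if i = j, and Tr[(W_i ⊗ W_j) · R] = d if i ≠ j. (Paper's Eq. (WAWBbell): the maximally entangled state breaks the symmetry between equal and opposite cyclic permutations on the two subsystems.) -/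

import Mathlib

open Matrix Kronecker

noncomputable section

/-- Permutation operator `W_π` of local index `I`: `W_π[b,a] = 1` iff `b = a ∘ π`. -/
def permOp (I : Type*) [DecidableEq I] {t : ℕ} (π : Equiv.Perm (Fin t)) :
    Matrix (Fin t → I) (Fin t → I) ℂ :=
  Matrix.of fun b a => if b = a ∘ ⇑π then 1 else 0

/-- `t`-fold Kronecker power of a matrix. -/
def kpow {I : Type*} (M : Matrix I I ℂ) (t : ℕ) :
    Matrix (Fin t → I) (Fin t → I) ℂ :=
  Matrix.of fun a b => ∏ i, M (a i) (b i)

/-- the 3-cycle (0 1 2) of `Fin 3` -/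
def c3 : Equiv.Perm (Fin 3) := finRotate 3

/-- The unnormalized maximally entangled projector `|Σ_s ss⟩⟨Σ_s ss|`. -/
def psiTilde (d : ℕ) : Matrix (Fin d × Fin d) (Fin d × Fin d) ℂ :=
  Matrix.of fun p q =>
    (if p.1 = p.2 then 1 else 0) * (if q.1 = q.2 then 1 else 0)

private lemma trace_reduction (d : ℕ) (i j : Equiv.Perm (Fin 3)) :
    ((permOp (Fin d) i ⊗ₖ permOp (Fin d) j) *
        Matrix.reindex (Equiv.arrowProdEquivProdArrow (Fin 3) (fun _ => Fin d) (fun _ => Fin d))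
          (Equiv.arrowProdEquivProdArrow (Fin 3) (fun _ => Fin d) (fun _ => Fin d))
          (kpow (psiTilde d) 3)).trace =
      ∑ a : Fin 3 → Fin d, (if a ∘ ⇑i = a ∘ ⇑j then (1:ℂ) else 0) := by
  classical
  rw [Matrix.trace]
  simp only [Matrix.diag, Matrix.mul_apply, permOp, kpow, psiTilde,
    Matrix.reindex_apply, Matrix.submatrix_apply, Matrix.kroneckerMap_apply,
    Equiv.arrowProdEquivProdArrow, Equiv.coe_fn_symm_mk, Matrix.of_apply]
  rw [Finset.sum_comm]
  have h1 : ∀ y : (Fin 3 → Fin d) × (Fin 3 → Fin d),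
      (∑ x : (Fin 3 → Fin d) × (Fin 3 → Fin d),
        ((if x.1 = y.1 ∘ ⇑i then (1:ℂ) else 0) * (if x.2 = y.2 ∘ ⇑j then 1 else 0)) *
          ∏ k : Fin 3, (if y.1 k = y.2 k then (1:ℂ) else 0) * (if x.1 k = x.2 k then 1 else 0))
      = (if y.1 = y.2 then 1 else 0) * (if y.1 ∘ ⇑i = y.2 ∘ ⇑j then 1 else 0) := by
    intro y
    rw [Finset.sum_eq_single ((y.1 ∘ ⇑i, y.2 ∘ ⇑j) : (Fin 3 → Fin d) × (Fin 3 → Fin d))]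
    · rw [if_pos rfl, if_pos rfl, one_mul, one_mul, Finset.prod_mul_distrib,
        Finset.prod_boole, Finset.prod_boole]
      simp [funext_iff]
    · intro x _ hx
      by_cases ha : x.1 = y.1 ∘ ⇑i
      · have hb : x.2 ≠ y.2 ∘ ⇑j := fun hb => hx (Prod.ext_iff.mpr ⟨ha, hb⟩)
        simp [hb]
      · simp [ha]
    · simp
  rw [Finset.sum_congr rfl fun y _ => h1 y, Fintype.sum_prod_type]
  apply Finset.sum_congr rfl
  intro a _
  rw [Finset.sum_eq_single a]
  · simp
  · intro x _ hx
    simp [Ne.symm hx]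
  · simp

private lemma count_cyc (d : ℕ) :
    ∑ a : Fin 3 → Fin d, (if a ∘ ⇑c3 = a ∘ ⇑c3⁻¹ then (1:ℂ) else 0) = d := by
  classical
  have key : ∀ a : Fin 3 → Fin d, (a ∘ ⇑c3 = a ∘ ⇑c3⁻¹) ↔ (∀ k, a k = a 0) := by
    intro a
    rw [funext_iff]
    have e0 : (⇑c3 0 : Fin 3) = 1 := by decide
    have e1 : (⇑c3 1 : Fin 3) = 2 := by decide
    have e2 : (⇑c3 2 : Fin 3) = 0 := by decide
    have f0 : (⇑c3⁻¹ 0 : Fin 3) = 2 := by decide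
    have f1 : (⇑c3⁻¹ 1 : Fin 3) = 0 := by decide
    have f2 : (⇑c3⁻¹ 2 : Fin 3) = 1 := by decide
    constructor
    · intro h k
      have h0 := h 0; have h1 := h 1; have h2 := h 2
      simp only [Function.comp_apply, e0, e1, e2, f0, f1, f2] at h0 h1 h2
      fin_cases k
      · rfl
      · exact h2.symm
      · exact h1
    · intro h k
      simp only [Function.comp_apply]
      rw [h (c3 k), h (c3⁻¹ k)]
  rw [Finset.sum_boole]
  norm_cast
  conv_rhs => rw [show (d:ℕ) = (Finset.univ : Finset (Fin d)).card by simp]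
  refine Finset.card_nbij' (fun a => a 0) (fun v _ => v) ?_ ?_ ?_ ?_
  · intro a _; exact Finset.mem_univ _
  · intro v _
    simp only [Finset.mem_coe, Finset.mem_filter, Finset.mem_univ, true_and, key]
    intro k; trivial
  · intro a ha
    simp only [Finset.mem_coe, Finset.mem_filter, Finset.mem_univ, true_and, key] at ha
    funext k; exact (ha k).symm
  · intro v _; rfl

private lemma sum_diag (d : ℕ) (π : Equiv.Perm (Fin 3)) :
    ∑ a : Fin 3 → Fin d, (if a ∘ ⇑π = a ∘ ⇑π then (1:ℂ) else 0) = (d:ℂ)^3 := by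
  simp [Finset.sum_const, Finset.card_univ]

theorem stmt_11 (d : ℕ) (hd : 1 ≤ d) (i j : Equiv.Perm (Fin 3))
    (hi : i = c3 ∨ i = c3⁻¹) (hj : j = c3 ∨ j = c3⁻¹) :
    ((permOp (Fin d) i ⊗ₖ permOp (Fin d) j) *
        Matrix.reindex (Equiv.arrowProdEquivProdArrow (Fin 3) (fun _ => Fin d) (fun _ => Fin d))
          (Equiv.arrowProdEquivProdArrow (Fin 3) (fun _ => Fin d) (fun _ => Fin d))
          (kpow (psiTilde d) 3)).trace =
      if i = j then (d : ℂ) ^ 3 else (d : ℂ) := by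
  classical
  rw [trace_reduction]
  have hne : c3 ≠ c3⁻¹ := by decide
  rcases hi with rfl | rfl <;> rcases hj with rfl | rfl
  · rw [if_pos rfl]; exact sum_diag d _
  · rw [if_neg hne]; exact count_cyc d
  · rw [if_neg (Ne.symm hne)]
    have := count_cyc d
    calc ∑ a : Fin 3 → Fin d, (if a ∘ ⇑c3⁻¹ = a ∘ ⇑c3 then (1:ℂ) else 0)
        = ∑ a : Fin 3 → Fin d, (if a ∘ ⇑c3 = a ∘ ⇑c3⁻¹ then (1:ℂ) else 0) := by
          apply Finset.sum_congr rfl; intro a _; simp [eq_comm]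
      _ = d := count_cyc d
  · rw [if_pos rfl]; exact sum_diag d _
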